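/- arXiv:1805.03452 — 4 statements merged into one kernel-verified Lean document; each statement's English description precedes it below -/
import Mathlib

section
/- Let F be a field and let f₁, …, f_n ∈ F[u,v] be polynomials, not all zero, whose greatest common divisor is a unit (the f_i have no common non-constant factor). Let m be the minimum, over the nonzero f_i, of the multiplicity of f_i at the origin. Then the greatest common divisor of the polynomials f₁(u·v, v), …, f_n(u·v, v) is associated to v^m. -/
open MvPolynomial

namespace BlowupAux
variable {F : Type*} [Field F]

/-- exponent transform of the blowup substitution: `(a,b) ↦ (a, a+b)` -/
noncomputable def T (d : Fin 2 →₀ ℕ) : Fin 2 →₀ ℕ := d + Finsupp.single 1 (d 0)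

lemma T0 (d : Fin 2 →₀ ℕ) : T d 0 = d 0 := by simp [T]
lemma T1 (d : Fin 2 →₀ ℕ) : T d 1 = d 1 + d 0 := by simp [T]

lemma fin2_ext {d e : Fin 2 →₀ ℕ} (h0 : d 0 = e 0) (h1 : d 1 = e 1) : d = e := by
  ext i
  fin_cases i
  · exact h0
  · exact h1

lemma T_inj : Function.Injective (T) := by
  intro d e h
  have h0 : d 0 = e 0 := by
    have := congrArg (fun x => x 0) h
    simpa [T0] using this
  have h1 : d 1 + d 0 = e 1 + e 0 := by
    have := congrArg (fun x => x 1) h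
    simpa [T1] using this
  exact fin2_ext h0 (by omega)

lemma phi_monomial (d : Fin 2 →₀ ℕ) (c : F) :
    aeval ![(X 0 : MvPolynomial (Fin 2) F) * X 1, X 1] (monomial d c) = monomial (T d) c := by
  rw [aeval_monomial]
  rw [Finsupp.prod_fintype _ _ (fun i => pow_zero _), Fin.prod_univ_two]
  simp only [Matrix.cons_val_zero, Matrix.cons_val_one, Matrix.head_cons]
  rw [mul_pow, algebraMap_eq]
  rw [show (C c : MvPolynomial (Fin 2) F) = monomial 0 c from rfl]
  rw [X_pow_eq_monomial, X_pow_eq_monomial, X_pow_eq_monomial,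
    monomial_mul, monomial_mul, monomial_mul]
  rw [mul_one, mul_one, mul_one]
  refine congrArg (fun e => (monomial e c : MvPolynomial (Fin 2) F)) (fin2_ext ?_ ?_) <;>
    simp [T, Finsupp.single_apply] <;> omega


lemma phi_eq_sum (p : MvPolynomial (Fin 2) F) :
    aeval ![(X 0 : MvPolynomial (Fin 2) F) * X 1, X 1] p
      = ∑ d ∈ p.support, monomial (T d) (coeff d p) := by
  conv_lhs => rw [p.as_sum]
  rw [map_sum]
  exact Finset.sum_congr rfl fun d _ => phi_monomial d _

lemma coeff_phi (p : MvPolynomial (Fin 2) F) (d : Fin 2 →₀ ℕ) :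
    coeff (T d) (aeval ![(X 0 : MvPolynomial (Fin 2) F) * X 1, X 1] p) = coeff d p := by
  classical
  rw [phi_eq_sum, coeff_sum]
  simp only [coeff_monomial, T_inj.eq_iff]
  rw [Finset.sum_ite_eq' p.support d (fun d => coeff d p)]
  split_ifs with h
  · rfl
  · exact (notMem_support_iff.mp h).symm

lemma phi_inj : Function.Injective
    (aeval ![(X 0 : MvPolynomial (Fin 2) F) * X 1, X 1] :
      MvPolynomial (Fin 2) F → MvPolynomial (Fin 2) F) := by
  intro p q h
  ext d
  rw [← coeff_phi p d, ← coeff_phi q d, h]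

lemma support_phi {p : MvPolynomial (Fin 2) F} {e : Fin 2 →₀ ℕ}
    (he : e ∈ (aeval ![(X 0 : MvPolynomial (Fin 2) F) * X 1, X 1] p).support) :
    ∃ d ∈ p.support, e = T d := by
  classical
  rw [phi_eq_sum] at he
  have h2 := MvPolynomial.support_sum he
  rw [Finset.mem_biUnion] at h2
  obtain ⟨d, hd, hed⟩ := h2
  have := support_monomial_subset hed
  rw [Finset.mem_singleton] at this
  exact ⟨d, hd, this⟩

lemma X_pow_dvd {p : MvPolynomial (Fin 2) F} {k : ℕ} :
    (X 1 : MvPolynomial (Fin 2) F) ^ k ∣ p ↔ ∀ d ∈ p.support, k ≤ d 1 := by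
  classical
  constructor
  · rintro ⟨q, rfl⟩ d hd
    rw [mem_support_iff] at hd
    rw [mul_comm, X_pow_eq_monomial, coeff_mul_monomial'] at hd
    split_ifs at hd with h
    · simpa using (Finsupp.single_le_iff.mp h)
    · exact absurd rfl hd
  · intro h
    refine ⟨∑ d ∈ p.support, monomial (d - Finsupp.single 1 k) (coeff d p), ?_⟩
    rw [Finset.mul_sum]
    conv_lhs => rw [p.as_sum]
    refine Finset.sum_congr rfl fun d hd => ?_
    rw [X_pow_eq_monomial, monomial_mul, one_mul]
    refine congrArg (fun e => (monomial e (coeff d p) : MvPolynomial (Fin 2) F)) ?_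
    have := h d hd
    apply fin2_ext <;> simp [Finsupp.single_apply, Finsupp.tsub_apply] <;> omega


lemma eps_zero_of_X1_dvd {p : MvPolynomial (Fin 2) F}
    (h : (X 1 : MvPolynomial (Fin 2) F) ∣ p) :
    aeval ![(X 0 : MvPolynomial (Fin 2) F), 0] p = 0 := by
  obtain ⟨q, rfl⟩ := h
  rw [map_mul, aeval_X]
  simp

lemma X1_dvd_of_eps_zero {p : MvPolynomial (Fin 2) F}
    (h : aeval ![(X 0 : MvPolynomial (Fin 2) F), 0] p = 0) :
    (X 1 : MvPolynomial (Fin 2) F) ∣ p := by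
  classical
  rw [show (X 1 : MvPolynomial (Fin 2) F) = X 1 ^ 1 by rw [pow_one]]
  rw [X_pow_dvd]
  intro d hd
  by_contra hc
  have hd1 : d 1 = 0 := by omega
  -- the evaluation of p at v = 0 keeps exactly the monomials with d 1 = 0
  have heval : aeval ![(X 0 : MvPolynomial (Fin 2) F), 0] p
      = ∑ e ∈ p.support, if e 1 = 0 then monomial e (coeff e p) else 0 := by
    conv_lhs => rw [p.as_sum, map_sum]
    refine Finset.sum_congr rfl fun e _ => ?_
    rw [aeval_monomial, Finsupp.prod_fintype _ _ (fun i => pow_zero _), Fin.prod_univ_two]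
    simp only [Matrix.cons_val_zero, Matrix.cons_val_one, Matrix.head_cons]
    by_cases h1 : e 1 = 0
    · rw [if_pos h1, h1, pow_zero, mul_one, algebraMap_eq,
        show (C (coeff e p) : MvPolynomial (Fin 2) F) = monomial 0 (coeff e p) from rfl,
        X_pow_eq_monomial, monomial_mul, mul_one]
      refine congrArg (fun d => (monomial d (coeff e p) : MvPolynomial (Fin 2) F)) ?_
      apply fin2_ext <;> simp [Finsupp.single_apply, h1]
    · rw [if_neg h1, zero_pow h1, mul_zero, mul_zero]
  rw [heval] at h
  have hcoeff := congrArg (coeff d) h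
  rw [coeff_sum] at hcoeff
  simp only [coeff_zero] at hcoeff
  have : ∀ e ∈ p.support,
      coeff d (if e 1 = 0 then monomial e (coeff e p) else 0)
        = if e = d then coeff e p else 0 := by
    intro e _
    by_cases h1 : e 1 = 0
    · rw [if_pos h1, coeff_monomial]
    · rw [if_neg h1]
      rw [if_neg (by rintro rfl; exact h1 hd1)]
      exact coeff_zero d
  rw [Finset.sum_congr rfl this, Finset.sum_ite_eq' p.support d (fun e => coeff e p),
    if_pos hd] at hcoeff
  exact (mem_support_iff.mp hd) hcoeff

lemma prime_X1 : Prime (X 1 : MvPolynomial (Fin 2) F) := by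
  refine ⟨X_ne_zero _, ?_, ?_⟩
  · intro hu
    have h := eps_zero_of_X1_dvd (p := (1 : MvPolynomial (Fin 2) F)) hu.dvd
    rw [map_one] at h
    exact one_ne_zero h
  · intro a b hab
    have h := eps_zero_of_X1_dvd hab
    rw [map_mul] at h
    rcases mul_eq_zero.mp h with h' | h'
    · exact Or.inl (X1_dvd_of_eps_zero h')
    · exact Or.inr (X1_dvd_of_eps_zero h')


/-- Pushing a polynomial back through the blowup substitution, up to a power of `v`. -/
lemma pushback (r : MvPolynomial (Fin 2) F) :
    ∃ (l : ℕ) (s : MvPolynomial (Fin 2) F),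
      aeval ![(X 0 : MvPolynomial (Fin 2) F) * X 1, X 1] s = X 1 ^ l * r ∧
        (¬ (X 1 : MvPolynomial (Fin 2) F) ∣ r → ¬ (X 1 : MvPolynomial (Fin 2) F) ∣ s) := by
  classical
  set l := r.support.sup (fun d => d 0 - d 1) with hl
  set σ : (Fin 2 →₀ ℕ) → (Fin 2 →₀ ℕ) :=
    fun d => Finsupp.single 0 (d 0) + Finsupp.single 1 (d 1 + l - d 0) with hσ
  have hσ0 : ∀ d, σ d 0 = d 0 := by intro d; simp [hσ, Finsupp.single_apply]
  have hσ1 : ∀ d, σ d 1 = d 1 + l - d 0 := by intro d; simp [hσ, Finsupp.single_apply]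
  have hle : ∀ d ∈ r.support, d 0 ≤ d 1 + l := by
    intro d hd
    have h2 : d 0 - d 1 ≤ l := Finset.le_sup (f := fun d => d 0 - d 1) hd
    omega
  have hσinj : ∀ d ∈ r.support, ∀ e ∈ r.support, σ d = σ e → d = e := by
    intro d hd e he h
    have h0 : d 0 = e 0 := by rw [← hσ0 d, ← hσ0 e, h]
    have h1 : d 1 + l - d 0 = e 1 + l - e 0 := by rw [← hσ1 d, ← hσ1 e, h]
    have := hle d hd; have := hle e he
    exact fin2_ext h0 (by omega)
  set s : MvPolynomial (Fin 2) F := ∑ d ∈ r.support, monomial (σ d) (coeff d r) with hs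
  have hTσ : ∀ d ∈ r.support, T (σ d) = d + Finsupp.single 1 l := by
    intro d hd
    have := hle d hd
    apply fin2_ext
    · rw [T0, hσ0]; simp [Finsupp.single_apply]
    · rw [T1, hσ0, hσ1]; simp [Finsupp.single_apply]; omega
  refine ⟨l, s, ?_, ?_⟩
  · rw [hs, map_sum]
    conv_rhs => rw [r.as_sum, Finset.mul_sum]
    refine Finset.sum_congr rfl fun d hd => ?_
    rw [phi_monomial, hTσ d hd, X_pow_eq_monomial, monomial_mul, one_mul, add_comm]
  · intro hr hdvds
    -- there is a monomial of `r` with second exponent 0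
    have hrne : r ≠ 0 := by rintro rfl; exact hr (dvd_zero _)
    have hwit : ∃ d ∈ r.support, d 0 = d 1 + l := by
      rcases Nat.eq_zero_or_pos l with h0 | hpos
      · -- use a monomial with d 1 = 0
        have : ¬ ∀ d ∈ r.support, 1 ≤ d 1 := by
          intro hall
          apply hr
          have h1 : (X 1 : MvPolynomial (Fin 2) F) ^ 1 ∣ r := X_pow_dvd.mpr hall
          rwa [pow_one] at h1
        push_neg at this
        obtain ⟨d, hd, hd1⟩ := this
        have := hle d hd
        exact ⟨d, hd, by omega⟩
      · obtain ⟨d, hd, hdl⟩ := Finset.exists_mem_eq_sup r.support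
          (Finset.nonempty_of_ne_empty (mt support_eq_empty.mp hrne)) (fun d => d 0 - d 1)
        exact ⟨d, hd, by omega⟩
    obtain ⟨d, hd, hdeq⟩ := hwit
    -- then σ d has second exponent 0 and lies in the support of s
    have hcoeff : coeff (σ d) s = coeff d r := by
      rw [hs, coeff_sum]
      have : ∀ e ∈ r.support,
          coeff (σ d) (monomial (σ e) (coeff e r)) = if e = d then coeff e r else 0 := by
        intro e he
        rw [coeff_monomial]
        by_cases h' : e = d
        · rw [if_pos h', if_pos (by rw [h'])]
        · rw [if_neg h', if_neg (fun hc => h' (hσinj e he d hd hc))]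
      rw [Finset.sum_congr rfl this, Finset.sum_ite_eq' r.support d (fun e => coeff e r),
        if_pos hd]
    have hmem : σ d ∈ s.support := by
      rw [mem_support_iff, hcoeff]
      exact mem_support_iff.mp hd
    have := X_pow_dvd.mp (by rwa [pow_one] : (X 1 : MvPolynomial (Fin 2) F) ^ 1 ∣ s)
      (σ d) hmem
    rw [hσ1] at this
    omega

/-- Stripping powers of the prime `v` off a divisibility. -/
lemma strip {q a : MvPolynomial (Fin 2) F} (hq : ¬ (X 1 : MvPolynomial (Fin 2) F) ∣ q)
    (N : ℕ) (h : q ∣ (X 1 : MvPolynomial (Fin 2) F) ^ N * a) : q ∣ a := by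
  induction N generalizing a with
  | zero => simpa using h
  | succ N ih =>
    obtain ⟨w, hw⟩ := h
    have hXdvd : (X 1 : MvPolynomial (Fin 2) F) ∣ q * w := by
      rw [← hw, pow_succ]
      exact ⟨X 1 ^ N * a, by ring⟩
    
    rcases prime_X1.2.2 q w hXdvd with h' | h'
    · exact absurd h' hq
    · obtain ⟨w', rfl⟩ := h'
      have hcan : X 1 ^ N * a = q * w' := by
        have hne : (X 1 : MvPolynomial (Fin 2) F) ≠ 0 := X_ne_zero _
        apply mul_left_cancel₀ hne
        linear_combination hw
      exact ih ⟨w', hcan⟩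


/-- A common divisor of the blowup pullbacks that is coprime to `v` is a unit,
provided the original polynomials have unit gcd. -/
lemma coprime_common_divisor_isUnit {n : ℕ} {f : Fin n → MvPolynomial (Fin 2) F}
    (hgcd : ∀ g : MvPolynomial (Fin 2) F, (∀ i, g ∣ f i) → IsUnit g)
    {h : MvPolynomial (Fin 2) F} (hh : ¬ (X 1 : MvPolynomial (Fin 2) F) ∣ h)
    (hdvd : ∀ i, h ∣ aeval ![(X 0 : MvPolynomial (Fin 2) F) * X 1, X 1] (f i)) :
    IsUnit h := by
  obtain ⟨k, q, hq, hqnd⟩ := pushback h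
  have hqn := hqnd hh
  have hqf : ∀ i, q ∣ f i := by
    intro i
    obtain ⟨r, hr⟩ := hdvd i
    obtain ⟨l, s, hs, -⟩ := pushback r
    have key : aeval ![(X 0 : MvPolynomial (Fin 2) F) * X 1, X 1] (q * s)
        = aeval ![(X 0 : MvPolynomial (Fin 2) F) * X 1, X 1] (X 1 ^ (k + l) * f i) := by
      rw [map_mul, hq, hs, map_mul, map_pow, aeval_X]
      simp only [Matrix.cons_val_one, Matrix.head_cons, Matrix.cons_val_zero]
      rw [hr]
      ring
    have hqs := phi_inj key
    exact strip hqn (k + l) ⟨s, hqs.symm⟩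
  have hu := hgcd q hqf
  have hu2 : IsUnit ((X 1 : MvPolynomial (Fin 2) F) ^ k * h) := by
    rw [← hq]
    exact hu.map (aeval ![(X 0 : MvPolynomial (Fin 2) F) * X 1, X 1])
  exact isUnit_of_dvd_unit (dvd_mul_left h _) hu2

end BlowupAux

open BlowupAux

/-- Let `F` be a field and `f₁, …, f_n ∈ F[u,v]` polynomials, not all
zero, with no common non-constant factor (their gcd is a unit).  Let `m` be the minimum,
over the nonzero `f i`, of the multiplicity of `f i` at the origin (expressed below by:
`m` is a lower bound for the total degrees of the supports of the nonzero `f i`, and is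
attained on the support of some nonzero `f i`).  Then `v^m` is a greatest common divisor
of the pullbacks `f i (u·v, v)`: it divides all of them, and every common divisor of
them divides `v^m` (i.e. the gcd is associated to `v^m`).
Here `u = X 0`, `v = X 1`. -/
theorem gcd_of_blowup_pullbacks (F : Type*) [Field F] (n : ℕ)
    (f : Fin n → MvPolynomial (Fin 2) F)
    (hne : ∃ i, f i ≠ 0)
    (hgcd : ∀ g : MvPolynomial (Fin 2) F, (∀ i, g ∣ f i) → IsUnit g)
    (m : ℕ)
    (hmin : ∀ i, f i ≠ 0 → ∀ d ∈ (f i).support, m ≤ d 0 + d 1)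
    (hatt : ∃ i, f i ≠ 0 ∧ ∃ d ∈ (f i).support, d 0 + d 1 = m) :
    (∀ i, (X 1 : MvPolynomial (Fin 2) F) ^ m ∣
        aeval ![(X 0 : MvPolynomial (Fin 2) F) * X 1, X 1] (f i)) ∧
      ∀ g : MvPolynomial (Fin 2) F,
        (∀ i, g ∣ aeval ![(X 0 : MvPolynomial (Fin 2) F) * X 1, X 1] (f i)) →
          g ∣ (X 1 : MvPolynomial (Fin 2) F) ^ m := by
  constructor
  · intro i
    by_cases hfi : f i = 0
    · rw [hfi, map_zero]
      exact dvd_zero _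
    · rw [X_pow_dvd]
      intro e he
      obtain ⟨d, hd, rfl⟩ := support_phi he
      rw [T1]
      have := hmin i hfi d hd
      omega
  · intro g hg
    obtain ⟨i₀, hf₀, d₀, hd₀, hsum₀⟩ := hatt
    have hphi_ne : aeval ![(X 0 : MvPolynomial (Fin 2) F) * X 1, X 1] (f i₀) ≠ 0 := by
      intro hc
      exact hf₀ (phi_inj (by rw [hc, map_zero]))
    have hg_ne : g ≠ 0 := by
      rintro rfl
      exact hphi_ne (zero_dvd_iff.mp (hg i₀))
    obtain ⟨k, h, hhnd, hgkh⟩ :=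
      WfDvdMonoid.max_power_factor hg_ne (prime_X1 (F := F)).irreducible
    -- k ≤ m : the pullback of f i₀ has a monomial with v-exponent exactly m
    have hkm : k ≤ m := by
      have hdvk : (X 1 : MvPolynomial (Fin 2) F) ^ k ∣
          aeval ![(X 0 : MvPolynomial (Fin 2) F) * X 1, X 1] (f i₀) :=
        dvd_trans (by rw [hgkh]; exact dvd_mul_right _ _) (hg i₀)
      have hmem : T d₀ ∈
          (aeval ![(X 0 : MvPolynomial (Fin 2) F) * X 1, X 1] (f i₀)).support := by
        rw [mem_support_iff, coeff_phi]
        exact mem_support_iff.mp hd₀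
      have := X_pow_dvd.mp hdvk (T d₀) hmem
      rw [T1] at this
      omega
    have hhu : IsUnit h := by
      refine coprime_common_divisor_isUnit hgcd hhnd fun i => ?_
      exact dvd_trans (by rw [hgkh]; exact dvd_mul_left h _) (hg i)
    rw [hgkh]
    have hfin : (X 1 : MvPolynomial (Fin 2) F) ^ k * h ∣ X 1 ^ m * 1 :=
      mul_dvd_mul (pow_dvd_pow _ hkm) hhu.dvd
    simpa using hfin
end

section
/- The set of polynomials f ∈ ℂ[u,v] of total degree at most 2 such that f(0,0) = 0, f(1,−i) = 0, f(1,i) = 0, and such that f(u·v, v) is divisible by v with the quotient f(u·v,v)/v vanishing at (0,0), is a 2-dimensional ℂ-linear subspace equal to the span of {u² + v², u + v²}. -/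
open MvPolynomial

private lemma fin2_finsupp (m : Fin 2 →₀ ℕ) :
    m = Finsupp.single 0 (m 0) + Finsupp.single 1 (m 1) := by
  ext i; fin_cases i <;> simp

private lemma decomp (f : MvPolynomial (Fin 2) ℂ) (h : f.totalDegree ≤ 2) :
    f = C (coeff 0 f) + C (coeff (Finsupp.single 0 1) f) * X 0
      + C (coeff (Finsupp.single 1 1) f) * X 1
      + C (coeff (Finsupp.single 0 2) f) * X 0 ^ 2
      + C (coeff (Finsupp.single 0 1 + Finsupp.single 1 1) f) * (X 0 * X 1)
      + C (coeff (Finsupp.single 1 2) f) * X 1 ^ 2 := by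
  have e1 : (X 0 : MvPolynomial (Fin 2) ℂ) * X 1 = monomial (Finsupp.single 0 1 + Finsupp.single 1 1) 1 := by
    rw [X, X, monomial_mul, one_mul]
  ext m
  rcases le_or_gt (m 0 + m 1) 2 with hm | hm
  · simp only [pow_two, ← mul_assoc (X 0), e1, X, C_mul_monomial, mul_one, monomial_mul,
      coeff_add, coeff_monomial, coeff_C]
    rw [fin2_finsupp m]
    have h0 : m 0 ≤ 2 := by omega
    have h1 : m 1 ≤ 2 := by omega
    interval_cases hv0 : m 0 <;> interval_cases hv1 : m 1 <;>
      simp_all [Finsupp.ext_iff, Fin.forall_fin_two, Finsupp.single_apply]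
  · have hz : coeff m f = 0 := by
      apply coeff_eq_zero_of_totalDegree_lt
      calc f.totalDegree ≤ 2 := h
        _ < m 0 + m 1 := hm
        _ = ∑ i : Fin 2, m i := (Fin.sum_univ_two m).symm
        _ = _ := (Finset.sum_subset (Finset.subset_univ _) (by
              intro i _ hi
              exact Finsupp.notMem_support_iff.mp hi)).symm
    simp only [pow_two, ← mul_assoc (X 0), e1, X, C_mul_monomial, mul_one, monomial_mul,
      coeff_add, coeff_monomial, coeff_C, hz]
    rw [fin2_finsupp m]
    simp only [Finsupp.ext_iff, Fin.forall_fin_two, Finsupp.add_apply, Finsupp.single_apply]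
    norm_num
    split_ifs <;> first | omega | simp

/-- The set of polynomials `f ∈ ℂ[u,v]` of total degree at most `2`
such that `f(0,0) = 0`, `f(1,−i) = 0`, `f(1,i) = 0`, and such that `f(u·v,v)` is
divisible by `v` with the quotient vanishing at the origin, is a 2-dimensional
`ℂ`-linear subspace equal to the span of `{u² + v², u + v²}`.
Here `u = X 0`, `v = X 1`. -/
theorem set_basepoints_example :
    {f : MvPolynomial (Fin 2) ℂ | f.totalDegree ≤ 2 ∧
        eval ![(0 : ℂ), 0] f = 0 ∧
        eval ![(1 : ℂ), -Complex.I] f = 0 ∧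
        eval ![(1 : ℂ), Complex.I] f = 0 ∧
        ∃ g : MvPolynomial (Fin 2) ℂ,
          aeval ![(X 0 : MvPolynomial (Fin 2) ℂ) * X 1, X 1] f = X 1 * g ∧
          eval ![(0 : ℂ), 0] g = 0} =
      ↑(Submodule.span ℂ
        ({(X 0 : MvPolynomial (Fin 2) ℂ) ^ 2 + X 1 ^ 2, X 0 + X 1 ^ 2} :
          Set (MvPolynomial (Fin 2) ℂ))) ∧
    Module.finrank ℂ
        (Submodule.span ℂ
          ({(X 0 : MvPolynomial (Fin 2) ℂ) ^ 2 + X 1 ^ 2, X 0 + X 1 ^ 2} :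
            Set (MvPolynomial (Fin 2) ℂ))) = 2 := by
  constructor
  · ext f
    simp only [Set.mem_setOf_eq, SetLike.mem_coe, Submodule.mem_span_pair]
    constructor
    · rintro ⟨hdeg, h00, hm, hp, g, hg, hg0⟩
      have hI : Complex.I ^ 2 = -1 := Complex.I_sq
      have hf := decomp f hdeg
      rw [hf] at h00 hm hp hg
      simp only [eval_add, eval_mul, eval_pow, eval_C, eval_X, Matrix.cons_val_zero,
        Matrix.cons_val_one, Matrix.head_cons] at h00 hm hp
      have h1 : coeff 0 f = 0 := by linear_combination h00
      have hbdk : coeff (Finsupp.single 0 1) f + coeff (Finsupp.single 0 2) f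
          - coeff (Finsupp.single 1 2) f = 0 := by
        linear_combination (hm + hp) / 2 - h00 - (coeff (Finsupp.single 1 2) f) * hI
      have hce : coeff (Finsupp.single 1 1) f
          + coeff (Finsupp.single 0 1 + Finsupp.single 1 1) f = 0 := by
        linear_combination (Complex.I / 2) * hm - (Complex.I / 2) * hp
          + (coeff (Finsupp.single 1 1) f
            + coeff (Finsupp.single 0 1 + Finsupp.single 1 1) f) * hI
      simp only [map_add, map_mul, map_pow, aeval_C, aeval_X, Matrix.cons_val_zero,
        Matrix.cons_val_one, Matrix.head_cons, algebraMap_eq] at hg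
      have key : (C (coeff (Finsupp.single 0 1) f) * X 0 + C (coeff (Finsupp.single 1 1) f)
          + C (coeff (Finsupp.single 0 2) f) * (X 0 ^ 2 * X 1)
          + C (coeff (Finsupp.single 0 1 + Finsupp.single 1 1) f) * (X 0 * X 1)
          + C (coeff (Finsupp.single 1 2) f) * X 1
          : MvPolynomial (Fin 2) ℂ) = g := by
        apply mul_left_cancel₀ (X_ne_zero (R := ℂ) 1)
        rw [← hg, h1, map_zero]
        ring
      have hc : coeff (Finsupp.single 1 1) f = 0 := by
        rw [← key] at hg0
        simpa using hg0
      have he : coeff (Finsupp.single 0 1 + Finsupp.single 1 1) f = 0 := by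
        linear_combination hce - hc
      have hk : coeff (Finsupp.single 1 2) f
          = coeff (Finsupp.single 0 1) f + coeff (Finsupp.single 0 2) f := by
        linear_combination -hbdk
      refine ⟨coeff (Finsupp.single 0 2) f, coeff (Finsupp.single 0 1) f, ?_⟩
      conv_rhs => rw [hf]
      rw [h1, hc, he, hk, map_zero, map_add, smul_eq_C_mul, smul_eq_C_mul]
      ring
    · rintro ⟨s, t, rfl⟩
      have hI : Complex.I ^ 2 = -1 := Complex.I_sq
      refine ⟨?_, ?_, ?_, ?_, ?_⟩
      · refine le_trans (totalDegree_add _ _) (max_le ?_ ?_) <;>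
          refine le_trans (totalDegree_smul_le _ _) ?_ <;>
          refine le_trans (totalDegree_add _ _) (max_le ?_ ?_) <;>
          simp [totalDegree_X_pow, totalDegree_X]
      · simp
      · simp only [map_add, smul_eval, eval_add, eval_pow, eval_X, Matrix.cons_val_zero,
          Matrix.cons_val_one, Matrix.head_cons]
        linear_combination (s + t) * hI
      · simp only [map_add, smul_eval, eval_add, eval_pow, eval_X, Matrix.cons_val_zero,
          Matrix.cons_val_one, Matrix.head_cons]
        linear_combination (s + t) * hI
      · refine ⟨s • (X 0 ^ 2 * X 1 + X 1) + t • (X 0 + X 1), ?_, by simp⟩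
        simp only [map_add, map_smul, map_mul, map_pow, aeval_X, aeval_C, algebraMap_eq,
          Matrix.cons_val_zero, Matrix.cons_val_one, Matrix.head_cons, smul_eq_C_mul]
        ring
  · have li : LinearIndependent ℂ
        ![(X 0 : MvPolynomial (Fin 2) ℂ) ^ 2 + X 1 ^ 2, X 0 + X 1 ^ 2] := by
      rw [LinearIndependent.pair_iff]
      intro s t hst
      constructor
      · have := congrArg (coeff (Finsupp.single 0 2)) hst
        simpa [coeff_smul, coeff_X_pow, coeff_X', Finsupp.single_eq_single_iff] using this
      · have := congrArg (coeff (Finsupp.single 0 1)) hst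
        simpa [coeff_smul, coeff_X_pow, coeff_X', Finsupp.single_eq_single_iff] using this
    have hr : Set.range ![(X 0 : MvPolynomial (Fin 2) ℂ) ^ 2 + X 1 ^ 2, X 0 + X 1 ^ 2]
        = {(X 0 : MvPolynomial (Fin 2) ℂ) ^ 2 + X 1 ^ 2, X 0 + X 1 ^ 2} := by
      simp only [Matrix.range_cons, Matrix.range_empty, Set.union_empty,
        Set.union_singleton, Set.singleton_union]
      exact Set.pair_comm _ _
    have := finrank_span_eq_card li
    rw [hr] at this
    simpa using this
end

section
/- Let F be a field. A projective point y = (y₀:y₁:y₂:y₃:y₄) of X lies in the image of the map P (i.e., y is projectively equivalent to (x₀² : x₀x₁ : x₀x₂ : x₁² : x₁x₂) for some (x₀,x₁,x₂) with (x₀,x₁) ≠ (0,0)) if and only if (y₀, y₁, y₃) ≠ (0,0,0). Consequently the set of points of X not reachable by the parametrization P is exactly the curve E = {(0:0:s:0:t) : (s,t) ≠ (0,0)}, and every point (0:0:s:0:t) lies on X. -/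
/-- The parametrization `P : ℙ² ⇢ ℙ⁴`, `(x₀:x₁:x₂) ↦ (x₀² : x₀x₁ : x₀x₂ : x₁² : x₁x₂)`,
on coordinate representatives. -/
def Pmap {F : Type*} [Field F] (x : Fin 3 → F) : Fin 5 → F :=
  ![x 0 ^ 2, x 0 * x 1, x 0 * x 2, x 1 ^ 2, x 1 * x 2]

/-- The defining equations of the cubic surface `X ⊂ ℙ⁴`:
`y₂y₃ − y₁y₄ = y₁y₂ − y₀y₄ = y₁² − y₀y₃ = 0`. -/
def OnX {F : Type*} [Field F] (y : Fin 5 → F) : Prop :=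
  y 2 * y 3 - y 1 * y 4 = 0 ∧ y 1 * y 2 - y 0 * y 4 = 0 ∧ y 1 ^ 2 - y 0 * y 3 = 0

/-- A projective point `y` of `X` lies in the image of `P` (i.e. is
projectively equivalent to `P x` for some `x` with `(x₀,x₁) ≠ (0,0)`) iff
`(y₀,y₁,y₃) ≠ (0,0,0)`.  Consequently the unreachable points of `X` are exactly the
exceptional curve `E = {(0:0:s:0:t) : (s,t) ≠ (0,0)}`, and every `(0:0:s:0:t)` lies
on `X`. -/
theorem unreachable_curve_of_P (F : Type*) [Field F] :
    (∀ y : Fin 5 → F, y ≠ 0 → OnX y →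
      ((∃ x : Fin 3 → F, ¬ (x 0 = 0 ∧ x 1 = 0) ∧ ∃ c : F, c ≠ 0 ∧ y = c • Pmap x) ↔
        ¬ (y 0 = 0 ∧ y 1 = 0 ∧ y 3 = 0))) ∧
    (∀ y : Fin 5 → F, y ≠ 0 → OnX y → (y 0 = 0 ∧ y 1 = 0 ∧ y 3 = 0) →
      ∃ s t : F, ¬ (s = 0 ∧ t = 0) ∧ y = ![0, 0, s, 0, t]) ∧
    ∀ s t : F, ¬ (s = 0 ∧ t = 0) →
      (![0, 0, s, 0, t] : Fin 5 → F) ≠ 0 ∧ OnX (![0, 0, s, 0, t] : Fin 5 → F) := by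
  refine ⟨fun y hy hX => ?_, fun y hy hX h => ?_, fun s t hst => ?_⟩
  · obtain ⟨h1, h2, h3⟩ := hX
    constructor
    · rintro ⟨x, hx, c, hc, rfl⟩ ⟨e0, e1, e3⟩
      simp [Pmap] at e0 e1 e3
      exact hx ⟨e0.resolve_left hc, e3.resolve_left hc⟩
    · intro hne
      by_cases h0 : y 0 = 0
      · have hy1 : y 1 = 0 := by
          have : y 1 ^ 2 = 0 := by rw [h0] at h3; simpa using h3
          exact pow_eq_zero_iff (n := 2) (by norm_num) |>.mp this
        have hy3 : y 3 ≠ 0 := fun h => hne ⟨h0, hy1, h⟩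
        have hy2 : y 2 = 0 := by
          have : y 2 * y 3 = 0 := by rw [hy1] at h1; simpa using h1
          rcases mul_eq_zero.mp this with h | h
          · exact h
          · exact absurd h hy3
        refine ⟨![0, y 3, y 4], fun h => hy3 (by simpa using h.2), (y 3)⁻¹, inv_ne_zero hy3, ?_⟩
        funext i
        fin_cases i <;>
          simp [Pmap, h0, hy1, hy2, mul_comm, mul_assoc, inv_mul_cancel₀ hy3] <;>
          field_simp <;> ring
      · refine ⟨![y 0, y 1, y 2], fun h => h0 h.1, (y 0)⁻¹, inv_ne_zero h0, ?_⟩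
        funext i
        fin_cases i
        · simp [Pmap]; field_simp
        · simp [Pmap]; field_simp
        · simp [Pmap]; field_simp
        · simp [Pmap]; field_simp; linear_combination -h3
        · simp [Pmap]; field_simp; linear_combination -h2
  · obtain ⟨h0, h1, h3⟩ := h
    refine ⟨y 2, y 4, fun h => hy ?_, ?_⟩
    · funext i; fin_cases i <;> simp [h0, h1, h3, h.1, h.2]
    · funext i; fin_cases i <;> simp [h0, h1, h3]
  · constructor
    · intro h
      apply hst
      constructor
      · have := congrFun h 2; simpa using this
      · have := congrFun h 4; simpa using this
    · refine ⟨?_, ?_, ?_⟩ <;> simp [OnX]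
end

section
/- Let F be a field. The four polynomials x₀² − x₀x₁, x₀x₂, x₁², x₁x₂ have a common zero at a point (x₀,x₁,x₂) ≠ (0,0,0) if and only if x₀ = x₁ = 0. Hence the base locus of the map Q is the single projective point (0:0:1), and it is a basepoint of multiplicity one: the minimum over the four polynomials of the multiplicity at (0,0) of their dehomogenizations at x₂ = 1 (namely u² − uv, u, v², v in F[u,v] with u = x₀, v = x₁) equals 1. -/
open MvPolynomial

/-- The four polynomials `x₀² − x₀x₁, x₀x₂, x₁², x₁x₂` have a common
zero at a nonzero point iff `x₀ = x₁ = 0`; hence the base locus of `Q` is the single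
projective point `(0:0:1)`.  It is a basepoint of multiplicity one: the dehomogenizations
`u² − uv, u, v², v` (with `u = X 0`, `v = X 1`) are nonzero, every monomial in their
supports has total degree at least `1`, and total degree exactly `1` is attained, so the
minimum of their multiplicities at the origin equals `1`. -/
theorem base_locus_of_Q (F : Type*) [Field F] :
    (∀ x₀ x₁ x₂ : F, (x₀, x₁, x₂) ≠ (0, 0, 0) →
      ((x₀ ^ 2 - x₀ * x₁ = 0 ∧ x₀ * x₂ = 0 ∧ x₁ ^ 2 = 0 ∧ x₁ * x₂ = 0) ↔
        (x₀ = 0 ∧ x₁ = 0))) ∧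
    (∀ x₀ x₁ x₂ : F, (x₀, x₁, x₂) ≠ (0, 0, 0) →
      (x₀ ^ 2 - x₀ * x₁ = 0 ∧ x₀ * x₂ = 0 ∧ x₁ ^ 2 = 0 ∧ x₁ * x₂ = 0) →
      ∃ c : F, c ≠ 0 ∧ (x₀, x₁, x₂) = (0, 0, c)) ∧
    (∀ f ∈ ({X 0 ^ 2 - X 0 * X 1, X 0, X 1 ^ 2, X 1} : Set (MvPolynomial (Fin 2) F)),
      f ≠ 0 ∧ ∀ d ∈ f.support, 1 ≤ d 0 + d 1) ∧
    ∃ f ∈ ({X 0 ^ 2 - X 0 * X 1, X 0, X 1 ^ 2, X 1} : Set (MvPolynomial (Fin 2) F)),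
      ∃ d ∈ f.support, d 0 + d 1 = 1 := by
  refine ⟨?_, ?_, ?_, ?_⟩
  · intro x₀ x₁ x₂ hne
    constructor
    · rintro ⟨h1, h2, h3, h4⟩
      have hx1 : x₁ = 0 := by
        have := pow_eq_zero_iff (n := 2) (by norm_num) |>.mp h3
        exact this
      subst hx1
      have hx0 : x₀ = 0 := by
        have : x₀ ^ 2 = 0 := by linear_combination h1
        exact pow_eq_zero_iff (n := 2) (by norm_num) |>.mp this
      exact ⟨hx0, rfl⟩
    · rintro ⟨h0, h1⟩
      subst h0; subst h1
      simp
  · intro x₀ x₁ x₂ hne h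
    have hx1 : x₁ = 0 := pow_eq_zero_iff (n := 2) (by norm_num) |>.mp h.2.2.1
    subst hx1
    have hx0 : x₀ = 0 := by
      have : x₀ ^ 2 = 0 := by linear_combination h.1
      exact pow_eq_zero_iff (n := 2) (by norm_num) |>.mp this
    subst hx0
    refine ⟨x₂, ?_, rfl⟩
    intro hc
    exact hne (by simp [hc])
  · have key : ∀ f : MvPolynomial (Fin 2) F, constantCoeff f = 0 →
        ∀ d ∈ f.support, 1 ≤ d 0 + d 1 := by
      intro f hc d hd
      by_contra hlt
      push_neg at hlt
      interval_cases h0 : d 0 + d 1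
      have h1 : d 0 = 0 := by omega
      have h2 : d 1 = 0 := by omega
      have hd0 : d = 0 := by
        ext i
        fin_cases i
        · exact h1
        · exact h2
      rw [mem_support_iff, hd0] at hd
      rw [show MvPolynomial.coeff 0 f = constantCoeff f from rfl] at hd
      exact hd hc
    rintro f (rfl | rfl | rfl | rfl)
    · constructor
      · intro h
        have := congrArg (eval (fun i : Fin 2 => if i = 0 then (1 : F) else 0)) h
        simp at this
      · exact key _ (by simp)
    · exact ⟨X_ne_zero 0, key _ (by simp)⟩
    · exact ⟨pow_ne_zero _ (X_ne_zero 1), key _ (by simp)⟩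
    · exact ⟨X_ne_zero 1, key _ (by simp)⟩
  · refine ⟨X 0, by simp, Finsupp.single 0 1, ?_, ?_⟩
    · rw [support_X]; simp
    · simp [Finsupp.single_apply]
end
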